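/- ∫₀^1 x · ln(1/(1−x²)) · K(x) dx = 4(1 − ln 2), where K(x) = ∫₀^{π/2} dθ/√(1 − x² sin²θ) is the complete elliptic integral of the first kind. -/

import Mathlib

open Real MeasureTheory

/-- The complete elliptic integral of the first kind. -/
noncomputable def ellipticK (x : ℝ) : ℝ :=
  ∫ θ in (0 : ℝ)..(π / 2), 1 / Real.sqrt (1 - x ^ 2 * Real.sin θ ^ 2)

/-- value of the inner x-integral as a function of θ -/
noncomputable def gfun (θ : ℝ) : ℝ :=
  2 * (Real.cos θ * Real.log (2 * Real.cos θ / (1 + Real.cos θ)) + 1 - Real.cos θ) / Real.sin θ ^ 2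

/-- antiderivative in x -/
noncomputable def Phi (θ : ℝ) (x : ℝ) : ℝ :=
  ((Real.sqrt (1 - x ^ 2 * Real.sin θ ^ 2) - Real.cos θ) * Real.log (Real.sqrt (1 - x ^ 2 * Real.sin θ ^ 2) - Real.cos θ)
   + (Real.sqrt (1 - x ^ 2 * Real.sin θ ^ 2) + Real.cos θ) * Real.log (Real.sqrt (1 - x ^ 2 * Real.sin θ ^ 2) + Real.cos θ)
   - 2 * Real.sqrt (1 - x ^ 2 * Real.sin θ ^ 2)
   - Real.sqrt (1 - x ^ 2 * Real.sin θ ^ 2) * Real.log (Real.sin θ ^ 2)) / Real.sin θ ^ 2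

lemma continuous_Phi (θ : ℝ) (hc : 0 < Real.cos θ) : Continuous (Phi θ) := by
  have hw : Continuous (fun x : ℝ => Real.sqrt (1 - x ^ 2 * Real.sin θ ^ 2)) :=
    Real.continuous_sqrt.comp (by continuity)
  apply Continuous.div_const
  refine Continuous.sub (Continuous.sub (Continuous.add ?_ ?_) (by continuity)) ?_
  · exact Real.continuous_mul_log.comp (hw.sub continuous_const)
  · refine Continuous.mul (hw.add continuous_const) ?_
    refine (Real.continuousOn_log.comp_continuous (hw.add continuous_const) ?_)
    intro x
    have := Real.sqrt_nonneg (1 - x ^ 2 * Real.sin θ ^ 2)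
    simp only [Set.mem_compl_iff, Set.mem_singleton_iff]
    nlinarith
  · exact hw.mul continuous_const

lemma hasDerivAt_Phi (θ : ℝ) (hs : 0 < Real.sin θ) (hc : 0 < Real.cos θ)
    (x : ℝ) (hx : x ∈ Set.Ioo (0:ℝ) 1) :
    HasDerivAt (Phi θ)
      (x * Real.log (1 / (1 - x ^ 2)) * (1 / Real.sqrt (1 - x ^ 2 * Real.sin θ ^ 2))) x := by
  unfold Phi
  obtain ⟨hx0, hx1⟩ := hx
  set s := Real.sin θ with hsdef
  set c := Real.cos θ with hcdef
  have hpyth : s ^ 2 + c ^ 2 = 1 := Real.sin_sq_add_cos_sq θ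
  have hs1 : s < 1 := by nlinarith
  have hv : 0 < 1 - x ^ 2 * s ^ 2 := by nlinarith
  set w := Real.sqrt (1 - x ^ 2 * s ^ 2) with hwdef
  have hw2 : w ^ 2 = 1 - x ^ 2 * s ^ 2 := Real.sq_sqrt hv.le
  have hwpos : 0 < w := Real.sqrt_pos.mpr hv
  have hwc : c < w := by
    have hx2 : x ^ 2 < 1 := by nlinarith
    have : c ^ 2 < w ^ 2 := by
      rw [hw2]
      nlinarith [mul_pos (mul_pos hs hs) (sub_pos.mpr hx2)]
    nlinarith
  -- derivative of w
  have hvx : HasDerivAt (fun y : ℝ => 1 - y ^ 2 * s ^ 2) (-(2 * x * s ^ 2)) x := by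
    have : HasDerivAt (fun y : ℝ => 1 - y ^ 2 * s ^ 2) (0 - 2 * x ^ 1 * s ^ 2) x := by
      exact (hasDerivAt_const x 1).sub (((hasDerivAt_pow 2 x)).mul_const (s ^ 2))
    simpa using this
  have hwx : HasDerivAt (fun y : ℝ => Real.sqrt (1 - y ^ 2 * s ^ 2)) (-(2 * x * s ^ 2) / (2 * w)) x :=
    hvx.sqrt hv.ne'
  set w' := -(2 * x * s ^ 2) / (2 * w) with hw'def
  -- derivative of the big expression
  have h1 : HasDerivAt (fun y : ℝ => Real.sqrt (1 - y ^ 2 * s ^ 2) - c) w' x := by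
    simpa using hwx.sub_const c
  have h2 : HasDerivAt (fun y : ℝ => Real.sqrt (1 - y ^ 2 * s ^ 2) + c) w' x := by
    simpa using hwx.add_const c
  have hlog1 : HasDerivAt (fun y : ℝ => Real.log (Real.sqrt (1 - y ^ 2 * s ^ 2) - c))
      (w' / (w - c)) x := by
    have := (Real.hasDerivAt_log (by linarith : w - c ≠ 0)).comp x h1
    simpa [div_eq_inv_mul, Function.comp_def] using this
  have hlog2 : HasDerivAt (fun y : ℝ => Real.log (Real.sqrt (1 - y ^ 2 * s ^ 2) + c))
      (w' / (w + c)) x := by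
    have := (Real.hasDerivAt_log (by nlinarith : w + c ≠ 0)).comp x h2
    simpa [div_eq_inv_mul, Function.comp_def] using this
  have hD : HasDerivAt (fun y : ℝ =>
      ((Real.sqrt (1 - y ^ 2 * s ^ 2) - c) * Real.log (Real.sqrt (1 - y ^ 2 * s ^ 2) - c)
       + (Real.sqrt (1 - y ^ 2 * s ^ 2) + c) * Real.log (Real.sqrt (1 - y ^ 2 * s ^ 2) + c)
       - 2 * Real.sqrt (1 - y ^ 2 * s ^ 2)
       - Real.sqrt (1 - y ^ 2 * s ^ 2) * Real.log (s ^ 2)) / s ^ 2)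
      (((w' * Real.log (w - c) + (w - c) * (w' / (w - c)))
        + (w' * Real.log (w + c) + (w + c) * (w' / (w + c)))
        - 2 * w' - w' * Real.log (s ^ 2)) / s ^ 2) x := by
    exact ((((h1.mul hlog1).add (h2.mul hlog2)).sub ((hwx.const_mul 2).congr_deriv (by ring))).sub
      (hwx.mul_const (Real.log (s ^ 2)))).div_const (s ^ 2)
  convert hD using 1
  have hwc' : w - c ≠ 0 := by linarith
  have hwc'' : w + c ≠ 0 := by nlinarith
  have hkey : Real.log (w - c) + Real.log (w + c) - Real.log (s ^ 2) = Real.log (1 - x ^ 2) := by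
    rw [← Real.log_mul hwc' hwc'', ← Real.log_div (by nlinarith) (by positivity)]
    congr 1
    field_simp
    nlinarith
  have hlogx : Real.log (1 / (1 - x ^ 2)) = - Real.log (1 - x ^ 2) := by
    rw [one_div, Real.log_inv]
  rw [hlogx]
  have hgoal : (w' * Real.log (w - c) + (w - c) * (w' / (w - c)) + (w' * Real.log (w + c) + (w + c) * (w' / (w + c))) - 2 * w' - w' * Real.log (s ^ 2)) / s ^ 2
      = w' * (Real.log (w - c) + Real.log (w + c) - Real.log (s ^ 2)) / s ^ 2 := by
    field_simp
    ring
  rw [hgoal, hkey, hw'def]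
  field_simp

lemma Phi_one_sub_Phi_zero (θ : ℝ) (hs : 0 < Real.sin θ) (hc : 0 < Real.cos θ) :
    Phi θ 1 - Phi θ 0 = gfun θ := by
  set s := Real.sin θ with hsdef
  set c := Real.cos θ with hcdef
  have hpyth : s ^ 2 + c ^ 2 = 1 := Real.sin_sq_add_cos_sq θ
  have hc1 : c < 1 := by nlinarith
  have h1 : (1:ℝ) - 1 ^ 2 * s ^ 2 = c ^ 2 := by nlinarith
  have h0 : (1:ℝ) - 0 ^ 2 * s ^ 2 = 1 := by ring
  have hw1 : Real.sqrt ((1:ℝ) - 1 ^ 2 * s ^ 2) = c := by rw [h1]; exact Real.sqrt_sq hc.le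
  have hw0 : Real.sqrt ((1:ℝ) - 0 ^ 2 * s ^ 2) = 1 := by rw [h0]; exact Real.sqrt_one
  have hs2 : s ^ 2 = (1 - c) * (1 + c) := by nlinarith
  unfold Phi gfun
  rw [← hsdef, ← hcdef, hw1, hw0]
  rw [show c - c = (0:ℝ) by ring]
  rw [Real.log_zero]
  rw [show c + c = 2 * c by ring]
  rw [show (2:ℝ) * c / (1 + c) = 2 * c / (1 + c) from rfl]
  rw [Real.log_mul (by norm_num) hc.ne', Real.log_div (by positivity) (by nlinarith),
    Real.log_mul (by norm_num) hc.ne']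
  rw [hs2, Real.log_mul (by nlinarith) (by nlinarith)]
  field_simp
  ring

lemma integrand_nonneg (θ x : ℝ) (hx : x ∈ Set.Ioo (0:ℝ) 1) :
    0 ≤ x * Real.log (1 / (1 - x ^ 2)) * (1 / Real.sqrt (1 - x ^ 2 * Real.sin θ ^ 2)) := by
  obtain ⟨hx0, hx1⟩ := hx
  have h2 : (0:ℝ) < 1 - x ^ 2 := by nlinarith
  have : (1:ℝ) ≤ 1 / (1 - x ^ 2) := by
    rw [le_div_iff₀ h2]; nlinarith
  have hlog : 0 ≤ Real.log (1 / (1 - x ^ 2)) := Real.log_nonneg this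
  positivity

lemma integrableOn_slice (θ : ℝ) (hs : 0 < Real.sin θ) (hc : 0 < Real.cos θ) :
    IntegrableOn (fun x => x * Real.log (1 / (1 - x ^ 2)) * (1 / Real.sqrt (1 - x ^ 2 * Real.sin θ ^ 2)))
      (Set.Ioo (0:ℝ) 1) volume := by
  have := intervalIntegral.integrableOn_deriv_of_nonneg
    ((continuous_Phi θ hc).continuousOn : ContinuousOn (Phi θ) (Set.Icc 0 1))
    (hasDerivAt_Phi θ hs hc) (fun x hx => integrand_nonneg θ x hx)
  exact this.mono_set Set.Ioo_subset_Ioc_self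

lemma x_integral (θ : ℝ) (hs : 0 < Real.sin θ) (hc : 0 < Real.cos θ) :
    ∫ x in Set.Ioo (0:ℝ) 1,
      x * Real.log (1 / (1 - x ^ 2)) * (1 / Real.sqrt (1 - x ^ 2 * Real.sin θ ^ 2)) = gfun θ := by
  have hint : IntervalIntegrable
      (fun x => x * Real.log (1 / (1 - x ^ 2)) * (1 / Real.sqrt (1 - x ^ 2 * Real.sin θ ^ 2)))
      volume 0 1 :=
    (intervalIntegrable_iff_integrableOn_Ioo_of_le (by norm_num)).mpr (integrableOn_slice θ hs hc)
  have hFTC := intervalIntegral.integral_eq_sub_of_hasDeriv_right_of_le (by norm_num : (0:ℝ) ≤ 1)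
    ((continuous_Phi θ hc).continuousOn)
    (fun x hx => (hasDerivAt_Phi θ hs hc x hx).hasDerivWithinAt) hint
  rw [← MeasureTheory.integral_Ioc_eq_integral_Ioo, ← intervalIntegral.integral_of_le (by norm_num : (0:ℝ) ≤ 1),
    hFTC, Phi_one_sub_Phi_zero θ hs hc]

noncomputable def Nfun (t : ℝ) : ℝ :=
  (1 - t) * ((1 - t) * Real.log (1 - t)) + (1 + t) * ((1 + t) * Real.log (1 + t))

noncomputable def Psi (t : ℝ) : ℝ := -(Nfun t / t) + 4 * t

lemma continuous_Nfun : Continuous Nfun := by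
  unfold Nfun
  have h1 : Continuous fun t : ℝ => (1 - t) * Real.log (1 - t) :=
    Real.continuous_mul_log.comp (by continuity)
  have h2 : Continuous fun t : ℝ => (1 + t) * Real.log (1 + t) :=
    Real.continuous_mul_log.comp (by continuity)
  exact ((continuous_const.sub continuous_id).mul h1).add
    ((continuous_const.add continuous_id).mul h2)

lemma hasDerivAt_Nfun (t : ℝ) (h1 : 1 - t ≠ 0) (h2 : 1 + t ≠ 0) :
    HasDerivAt Nfun
      ((-1) * ((1 - t) * Real.log (1 - t)) + (1 - t) * ((-1) * Real.log (1 - t) + (1 - t) * (-(1 - t)⁻¹))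
       + ((1) * ((1 + t) * Real.log (1 + t)) + (1 + t) * ((1) * Real.log (1 + t) + (1 + t) * (1 + t)⁻¹))) t := by
  have ha : HasDerivAt (fun t : ℝ => 1 - t) (-1) t := by
    simpa [Pi.sub_def] using (hasDerivAt_const t (1:ℝ)).sub (hasDerivAt_id t)
  have hb : HasDerivAt (fun t : ℝ => 1 + t) (1) t := by
    simpa [Pi.add_def] using (hasDerivAt_const t (1:ℝ)).add (hasDerivAt_id t)
  have hla : HasDerivAt (fun t : ℝ => Real.log (1 - t)) (-(1 - t)⁻¹) t := by
    have := (Real.hasDerivAt_log h1).comp t ha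
    simpa [mul_comm, Function.comp_def] using this
  have hlb : HasDerivAt (fun t : ℝ => Real.log (1 + t)) ((1 + t)⁻¹) t := by
    have := (Real.hasDerivAt_log h2).comp t hb
    simpa [mul_comm, Function.comp_def] using this
  exact ((ha.mul (ha.mul hla)).add (hb.mul (hb.mul hlb)))

lemma Nfun_zero : Nfun 0 = 0 := by simp [Nfun]

lemma hasDerivAt_Nfun_zero : HasDerivAt Nfun 0 0 := by
  have := hasDerivAt_Nfun 0 (by norm_num) (by norm_num)
  convert this using 1
  norm_num

lemma continuousOn_Psi : ContinuousOn Psi (Set.Icc (0:ℝ) 1) := by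
  intro t ht
  rcases eq_or_ne t 0 with rfl | htne
  · -- continuity at 0 via slope
    rw [← continuousWithinAt_diff_self]
    have hslope : Filter.Tendsto (slope Nfun 0) (nhdsWithin 0 {(0:ℝ)}ᶜ) (nhds 0) :=
      hasDerivAt_iff_tendsto_slope.mp hasDerivAt_Nfun_zero
    have hslope' : Filter.Tendsto (fun t => Nfun t / t) (nhdsWithin 0 {(0:ℝ)}ᶜ) (nhds 0) := by
      have : (slope Nfun 0) = fun t => Nfun t / t := by
        funext t
        simp [slope_def_field, Nfun_zero]
      rwa [this] at hslope
    have h4t : Filter.Tendsto (fun t : ℝ => 4 * t) (nhdsWithin 0 {(0:ℝ)}ᶜ) (nhds 0) := by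
      have : Filter.Tendsto (fun t : ℝ => 4 * t) (nhds 0) (nhds 0) := by
        have := (continuous_const.mul continuous_id :
          Continuous fun t : ℝ => 4 * t).tendsto 0
        simpa [Pi.mul_def] using this
      exact this.mono_left nhdsWithin_le_nhds
    have : Filter.Tendsto Psi (nhdsWithin 0 {(0:ℝ)}ᶜ) (nhds (Psi 0)) := by
      have hP0 : Psi 0 = 0 := by simp [Psi, Nfun_zero]
      rw [hP0]
      have := (hslope'.neg).add h4t
      show Filter.Tendsto (fun t => -(Nfun t / t) + 4 * t) _ _
      simpa [Psi] using this
    exact this.mono_left (nhdsWithin_mono _ (by intro y hy; exact hy.2))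
  · -- t ≠ 0
    have : ContinuousAt Psi t := by
      apply ContinuousAt.add
      · exact (ContinuousAt.div continuous_Nfun.continuousAt continuousAt_id htne).neg
      · exact (continuous_const.mul continuous_id).continuousAt
    exact this.continuousWithinAt

lemma hasDerivAt_Psi (t : ℝ) (h0 : 0 < t) (h1 : t < 1) :
    HasDerivAt Psi ((1 - t ^ 2) * (Real.log (1 - t) + Real.log (1 + t)) / t ^ 2 + 2) t := by
  have hN := hasDerivAt_Nfun t (by linarith) (by linarith)
  have hid : HasDerivAt (fun t : ℝ => t) 1 t := hasDerivAt_id t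
  have hdiv := hN.div hid h0.ne'
  have h4 : HasDerivAt (fun t : ℝ => 4 * t) 4 t := by
    simpa using (hasDerivAt_id t).const_mul (4:ℝ)
  have := (hdiv.neg).add h4
  refine this.congr_deriv ?_
  unfold Nfun
  have ha : (1:ℝ) - t ≠ 0 := by linarith
  have hb : (1:ℝ) + t ≠ 0 := by linarith
  field_simp
  ring

lemma half_facts (θ : ℝ) (hθ : θ ∈ Set.Ioo 0 (π/2)) :
    0 < Real.cos (θ/2) ∧ 0 < Real.tan (θ/2) ∧ Real.tan (θ/2) < 1 := by
  obtain ⟨h0, h1⟩ := hθ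
  have hpi := Real.pi_pos
  have hc2 : 0 < Real.cos (θ/2) :=
    Real.cos_pos_of_mem_Ioo ⟨by linarith, by linarith⟩
  refine ⟨hc2, ?_, ?_⟩
  · exact Real.tan_pos_of_pos_of_lt_pi_div_two (by linarith) (by linarith)
  · have := Real.tan_lt_tan_of_nonneg_of_lt_pi_div_two (by linarith : (0:ℝ) ≤ θ/2)
      (by linarith : π/4 < π/2) (by linarith : θ/2 < π/4)
    rwa [Real.tan_pi_div_four] at this

lemma cos_in_t (θ : ℝ) (hθ : θ ∈ Set.Ioo 0 (π/2)) :
    Real.cos θ = (1 - Real.tan (θ/2) ^ 2) / (1 + Real.tan (θ/2) ^ 2) ∧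
    Real.sin θ ^ 2 = 4 * Real.tan (θ/2) ^ 2 / (1 + Real.tan (θ/2) ^ 2) ^ 2 := by
  obtain ⟨hc2, _, _⟩ := half_facts θ hθ
  have hpy : Real.sin (θ/2) ^ 2 + Real.cos (θ/2) ^ 2 = 1 := Real.sin_sq_add_cos_sq _
  have hcos : Real.cos θ = 2 * Real.cos (θ/2) ^ 2 - 1 := by
    rw [show θ = 2 * (θ/2) by ring, Real.cos_two_mul]; norm_num
  have hsin : Real.sin θ = 2 * Real.sin (θ/2) * Real.cos (θ/2) := by
    rw [show θ = 2 * (θ/2) by ring, Real.sin_two_mul]; norm_num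
  rw [Real.tan_eq_sin_div_cos]
  constructor
  · rw [hcos]; field_simp; nlinarith
  · rw [hsin]; field_simp; rw [Real.cos_sq_add_sin_sq]; ring

lemma hasDerivAt_G (θ : ℝ) (hθ : θ ∈ Set.Ioo 0 (π/2)) :
    HasDerivAt (fun θ => Psi (Real.tan (θ/2))) (gfun θ) θ := by
  obtain ⟨hc2, ht0, ht1⟩ := half_facts θ hθ
  obtain ⟨hcos, hsin⟩ := cos_in_t θ hθ
  set t := Real.tan (θ/2) with htdef
  have htan : HasDerivAt (fun θ : ℝ => Real.tan (θ/2)) (1 / Real.cos (θ/2) ^ 2 * (1/2)) θ := by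
    have hhalf : HasDerivAt (fun θ : ℝ => θ/2) (1/2) θ := (hasDerivAt_id θ).div_const 2
    exact (Real.hasDerivAt_tan hc2.ne').comp θ hhalf
  have hcomp := (hasDerivAt_Psi t ht0 ht1).comp θ htan
  refine hcomp.congr_deriv ?_
  -- identity: gfun θ = (v t) * (1/cos(θ/2)^2 * (1/2))
  have hc2sq : 1 / Real.cos (θ/2) ^ 2 = 1 + t ^ 2 := by
    rw [htdef, Real.tan_eq_sin_div_cos]
    field_simp
    exact (Real.cos_sq_add_sin_sq _).symm
  have h1t2 : (0:ℝ) < 1 + t ^ 2 := by positivity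
  have hfrac : 2 * Real.cos θ / (1 + Real.cos θ) = (1 - t) * (1 + t) := by
    rw [hcos]
    have h1c : 1 + (1 - t ^ 2) / (1 + t ^ 2) = 2 / (1 + t ^ 2) := by field_simp; ring
    rw [h1c]
    field_simp
    ring
  unfold gfun
  rw [hfrac, Real.log_mul (by linarith) (by linarith), hcos, hsin, hc2sq]
  have ht2 : t ^ 2 ≠ 0 := by positivity
  field_simp
  ring

lemma mapsTo_tanhalf : Set.MapsTo (fun θ : ℝ => Real.tan (θ/2)) (Set.Icc 0 (π/2)) (Set.Icc 0 1) := by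
  intro θ hθ
  obtain ⟨h0, h1⟩ := hθ
  have hpi := Real.pi_pos
  constructor
  · exact Real.tan_nonneg_of_nonneg_of_le_pi_div_two (by linarith) (by linarith)
  · rcases lt_or_eq_of_le h1 with h | h
    · have := Real.tan_lt_tan_of_nonneg_of_lt_pi_div_two (by linarith : (0:ℝ) ≤ θ/2)
        (by linarith : π/4 < π/2) (by linarith : θ/2 < π/4)
      rw [Real.tan_pi_div_four] at this
      linarith
    · simp only []
      rw [show θ/2 = π/4 by rw [h]; ring, Real.tan_pi_div_four]

lemma continuousOn_G : ContinuousOn (fun θ : ℝ => Psi (Real.tan (θ/2))) (Set.Icc 0 (π/2)) := by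
  apply continuousOn_Psi.comp ?_ mapsTo_tanhalf
  apply Real.continuousOn_tan.comp (by fun_prop : Continuous fun θ : ℝ => θ/2).continuousOn
  intro θ hθ
  obtain ⟨h0, h1⟩ := hθ
  have hpi := Real.pi_pos
  have : 0 < Real.cos (θ/2) := Real.cos_pos_of_mem_Ioo ⟨by linarith, by linarith⟩
  exact this.ne'

lemma gfun_nonneg (θ : ℝ) (hθ : θ ∈ Set.Ioo 0 (π/2)) : 0 ≤ gfun θ := by
  obtain ⟨h0, h1⟩ := hθ
  have hc : 0 < Real.cos θ := Real.cos_pos_of_mem_Ioo ⟨by linarith [Real.pi_pos], h1⟩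
  have hs : 0 < Real.sin θ := Real.sin_pos_of_pos_of_lt_pi h0 (by linarith [Real.pi_pos])
  set c := Real.cos θ
  have hc1 : c < 1 := by
    nlinarith [Real.sin_sq_add_cos_sq θ]
  have hkey : Real.log ((1 + c)/(2*c)) ≤ (1 + c)/(2*c) - 1 :=
    Real.log_le_sub_one_of_pos (by positivity)
  have hinv : Real.log ((1 + c)/(2*c)) = - Real.log (2*c/(1+c)) := by
    rw [show (1 + c)/(2*c) = (2*c/(1+c))⁻¹ by rw [inv_div], Real.log_inv]
  rw [hinv] at hkey
  have hnum : 0 ≤ c * Real.log (2 * c / (1 + c)) + 1 - c := by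
    have h2 : c * Real.log (2*c/(1+c)) ≥ c * (1 - (1+c)/(2*c)) := by
      have : Real.log (2*c/(1+c)) ≥ 1 - (1+c)/(2*c) := by linarith
      nlinarith
    have h3 : c * (1 - (1+c)/(2*c)) = c - (1+c)/2 := by field_simp
    nlinarith
  unfold gfun
  positivity

lemma integrableOn_gfun : IntegrableOn gfun (Set.Ioo (0:ℝ) (π/2)) volume :=
  (intervalIntegral.integrableOn_deriv_of_nonneg continuousOn_G hasDerivAt_G gfun_nonneg).mono_set
    Set.Ioo_subset_Ioc_self

lemma theta_integral : ∫ θ in Set.Ioo (0:ℝ) (π/2), gfun θ = 4 - 4 * Real.log 2 := by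
  have hpi := Real.pi_pos
  have hle : (0:ℝ) ≤ π/2 := by linarith
  have hIntOn : IntegrableOn gfun (Set.Ioo (0:ℝ) (π/2)) volume :=
    (intervalIntegral.integrableOn_deriv_of_nonneg continuousOn_G hasDerivAt_G gfun_nonneg).mono_set
      Set.Ioo_subset_Ioc_self
  have hint : IntervalIntegrable gfun volume 0 (π/2) :=
    (intervalIntegrable_iff_integrableOn_Ioo_of_le hle).mpr hIntOn
  have hFTC := intervalIntegral.integral_eq_sub_of_hasDeriv_right_of_le hle continuousOn_G
    (fun θ hθ => (hasDerivAt_G θ hθ).hasDerivWithinAt) hint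
  rw [← MeasureTheory.integral_Ioc_eq_integral_Ioo, ← intervalIntegral.integral_of_le hle, hFTC]
  rw [show π/2/2 = π/4 by ring, Real.tan_pi_div_four, show (0:ℝ)/2 = 0 by ring, Real.tan_zero]
  unfold Psi Nfun
  norm_num
  ring

theorem stmt_11 :
    ∫ x in Set.Ioo (0 : ℝ) 1, x * Real.log (1 / (1 - x ^ 2)) * ellipticK x =
      4 * (1 - Real.log 2) := by
  have hpi := Real.pi_pos
  set f : ℝ → ℝ → ℝ := fun x θ => x * Real.log (1 / (1 - x ^ 2)) * (1 / Real.sqrt (1 - x ^ 2 * Real.sin θ ^ 2)) with hf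
  have hmeas : Measurable (Function.uncurry fun x θ => ENNReal.ofReal (f x θ)) := by
    apply Measurable.ennreal_ofReal
    apply Measurable.mul
    · apply Measurable.mul measurable_fst
      exact Real.measurable_log.comp (by fun_prop)
    · apply Measurable.div measurable_const
      exact Real.continuous_sqrt.measurable.comp (by fun_prop)
  -- slice facts for x ∈ Ioo 0 1
  have hslice : ∀ x ∈ Set.Ioo (0:ℝ) 1,
      ENNReal.ofReal (x * Real.log (1 / (1 - x ^ 2)) * ellipticK x)
        = ∫⁻ θ in Set.Ioo (0:ℝ) (π/2), ENNReal.ofReal (f x θ) := by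
    intro x hx
    obtain ⟨hx0, hx1⟩ := hx
    have hint : IntegrableOn (f x) (Set.Ioo (0:ℝ) (π/2)) volume := by
      have hcont : Continuous (f x) := by
        apply Continuous.mul continuous_const
        apply Continuous.div continuous_const
        · exact Real.continuous_sqrt.comp (by continuity)
        · intro θ
          have hsθ : Real.sin θ ^ 2 ≤ 1 := by nlinarith [Real.sin_sq_add_cos_sq θ, sq_nonneg (Real.cos θ)]
          have : 0 < 1 - x ^ 2 * Real.sin θ ^ 2 := by nlinarith
          positivity
      exact (hcont.integrableOn_Icc).mono_set Set.Ioo_subset_Icc_self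
    have hval : x * Real.log (1 / (1 - x ^ 2)) * ellipticK x = ∫ θ in Set.Ioo (0:ℝ) (π/2), f x θ := by
      unfold ellipticK
      rw [intervalIntegral.integral_of_le (by linarith : (0:ℝ) ≤ π/2),
        MeasureTheory.integral_Ioc_eq_integral_Ioo, ← MeasureTheory.integral_const_mul]
    rw [hval]
    exact MeasureTheory.ofReal_integral_eq_lintegral_ofReal hint
      (ae_of_all _ (fun θ => integrand_nonneg θ x ⟨hx0, hx1⟩))
  -- rewrite LHS as toReal of lintegral
  have hK_nonneg : ∀ x ∈ Set.Ioo (0:ℝ) 1, 0 ≤ x * Real.log (1 / (1 - x ^ 2)) * ellipticK x := by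
    intro x hx
    obtain ⟨hx0, hx1⟩ := hx
    have h2 : (0:ℝ) < 1 - x ^ 2 := by nlinarith
    have hlog : 0 ≤ Real.log (1 / (1 - x ^ 2)) := by
      apply Real.log_nonneg
      rw [le_div_iff₀ h2]; nlinarith
    have hK : 0 ≤ ellipticK x := by
      apply intervalIntegral.integral_nonneg (by linarith : (0:ℝ) ≤ π/2)
      intro u _
      positivity
    positivity
  have step1 : ∫ x in Set.Ioo (0:ℝ) 1, x * Real.log (1 / (1 - x ^ 2)) * ellipticK x
      = ∫ x in Set.Ioo (0:ℝ) 1, ENNReal.toReal (∫⁻ θ in Set.Ioo (0:ℝ) (π/2), ENNReal.ofReal (f x θ)) := by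
    apply MeasureTheory.setIntegral_congr_fun measurableSet_Ioo
    intro x hx
    dsimp only
    rw [← hslice x hx, ENNReal.toReal_ofReal (hK_nonneg x hx)]
  have hmeas2 : AEMeasurable (fun x => ∫⁻ θ in Set.Ioo (0:ℝ) (π/2), ENNReal.ofReal (f x θ))
      (volume.restrict (Set.Ioo (0:ℝ) 1)) :=
    (Measurable.lintegral_prod_right hmeas).aemeasurable
  have hfin : ∀ᵐ x ∂(volume.restrict (Set.Ioo (0:ℝ) 1)),
      (∫⁻ θ in Set.Ioo (0:ℝ) (π/2), ENNReal.ofReal (f x θ)) < ⊤ := by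
    filter_upwards [MeasureTheory.ae_restrict_mem measurableSet_Ioo] with x hx
    rw [← hslice x hx]
    exact ENNReal.ofReal_lt_top
  have step2 : ∫ x in Set.Ioo (0:ℝ) 1, ENNReal.toReal (∫⁻ θ in Set.Ioo (0:ℝ) (π/2), ENNReal.ofReal (f x θ))
      = ENNReal.toReal (∫⁻ x in Set.Ioo (0:ℝ) 1, ∫⁻ θ in Set.Ioo (0:ℝ) (π/2), ENNReal.ofReal (f x θ)) :=
    MeasureTheory.integral_toReal hmeas2 hfin
  have step3 : (∫⁻ x in Set.Ioo (0:ℝ) 1, ∫⁻ θ in Set.Ioo (0:ℝ) (π/2), ENNReal.ofReal (f x θ))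
      = ∫⁻ θ in Set.Ioo (0:ℝ) (π/2), ∫⁻ x in Set.Ioo (0:ℝ) 1, ENNReal.ofReal (f x θ) :=
    MeasureTheory.lintegral_lintegral_swap hmeas.aemeasurable
  have step4 : (∫⁻ θ in Set.Ioo (0:ℝ) (π/2), ∫⁻ x in Set.Ioo (0:ℝ) 1, ENNReal.ofReal (f x θ))
      = ∫⁻ θ in Set.Ioo (0:ℝ) (π/2), ENNReal.ofReal (gfun θ) := by
    apply MeasureTheory.setLIntegral_congr_fun_ae measurableSet_Ioo
    apply ae_of_all
    intro θ hθ
    obtain ⟨h0, h1⟩ := hθ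
    have hs : 0 < Real.sin θ := Real.sin_pos_of_pos_of_lt_pi h0 (by linarith)
    have hc : 0 < Real.cos θ := Real.cos_pos_of_mem_Ioo ⟨by linarith, h1⟩
    rw [← MeasureTheory.ofReal_integral_eq_lintegral_ofReal (integrableOn_slice θ hs hc)
      ((MeasureTheory.ae_restrict_iff' measurableSet_Ioo).mpr
        (ae_of_all _ (fun x hx => integrand_nonneg θ x hx))),
      x_integral θ hs hc]
  have step5 : (∫⁻ θ in Set.Ioo (0:ℝ) (π/2), ENNReal.ofReal (gfun θ))
      = ENNReal.ofReal (4 - 4 * Real.log 2) := by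
    rw [← theta_integral]
    rw [← MeasureTheory.ofReal_integral_eq_lintegral_ofReal integrableOn_gfun
      ((MeasureTheory.ae_restrict_iff' measurableSet_Ioo).mpr (ae_of_all _ gfun_nonneg))]
  rw [step1, step2, step3, step4, step5, ENNReal.toReal_ofReal]
  · ring
  · have h2 : Real.log 2 ≤ 1 := by
      have := Real.log_le_sub_one_of_pos (by norm_num : (0:ℝ) < 2)
      linarith
    linarith
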